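/- Given a permutation π ∈ S_n and j ∈ [2, n−1], all reduced words of π that are accepted by the automaton U(j) are accepted at the same state. More precisely: if π has no inversion (i,j) with i < j, all reduced words of π end at the same healthy state; if π has no inversion (j,k) with j < k, all reduced words end at the same state (healthy if π avoids the subword ji for i<j, ill if π contains ji but avoids jki, dead if π contains jki); and otherwise all accepted reduced words end at the same ill state. -/

import Mathlib

/-- The permutation of `ℕ` given by a word in the adjacent transpositions. -/
def wordProd (L : List ℕ) : Equiv.Perm ℕ :=
  (L.map (fun m => Equiv.swap m (m + 1))).prod

/-- `L` is a reduced word of `π ∈ S_n`. -/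
def IsRWord (n : ℕ) (π : Equiv.Perm ℕ) (L : List ℕ) : Prop :=
  (∀ m ∈ L, m ∈ Finset.Icc 1 (n - 1)) ∧ wordProd L = π ∧
    ∀ L' : List ℕ, (∀ m ∈ L', m ∈ Finset.Icc 1 (n - 1)) → wordProd L' = π →
      L.length ≤ L'.length

/-- States of the permutree-sorting automata. -/
inductive AState : Type
  | healthy (m : ℕ) : AState
  | ill (m : ℕ) : AState
  | dead : AState
deriving DecidableEq

/-- Transition function of the automaton `𝕌(j)`. -/
def Ustep : AState → ℕ → AState
  | .healthy m, x =>
      if x = m then .healthy (m + 1) else if x + 1 = m then .ill m else .healthy m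
  | .ill m, x => if x = m then .dead else .ill m
  | .dead, _ => .dead

/-- The state reached by the automaton `𝕌(j)` after reading `L`. -/
def Urun (j : ℕ) (L : List ℕ) : AState := L.foldl Ustep (.healthy j)

theorem Equiv.Perm.inv_apply_self {α : Type*} (f : Equiv.Perm α) (x : α) : f⁻¹ (f x) = x :=
  f.symm_apply_apply x

theorem Equiv.Perm.apply_inv_self {α : Type*} (f : Equiv.Perm α) (x : α) : f (f⁻¹ x) = x :=
  f.apply_symm_apply x

abbrev sw (a : ℕ) : Equiv.Perm ℕ := Equiv.swap a (a+1)

lemma sw_apply (a x : ℕ) : sw a x = if x = a then a+1 else if x = a+1 then a else x :=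
  Equiv.swap_apply_def a (a+1) x

lemma sw_sw (a x : ℕ) : sw a (sw a x) = x := Equiv.swap_apply_self a (a+1) x

lemma wordProd_nil : wordProd ([] : List ℕ) = 1 := rfl

lemma wordProd_cons (a : ℕ) (L : List ℕ) : wordProd (a :: L) = sw a * wordProd L := by
  simp [wordProd]

lemma wordProd_append (L M : List ℕ) : wordProd (L ++ M) = wordProd L * wordProd M := by
  simp [wordProd]

lemma wordProd_reverse (L : List ℕ) : wordProd L.reverse = (wordProd L)⁻¹ := by
  induction L with
  | nil => simp [wordProd]
  | cons a L ih =>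
      have h1 : wordProd [a] = sw a := by simp [wordProd]
      rw [List.reverse_cons, wordProd_append, ih, h1, wordProd_cons, mul_inv_rev,
        Equiv.swap_inv]

lemma inv_sw_mul (a : ℕ) (π : Equiv.Perm ℕ) (x : ℕ) : (sw a * π)⁻¹ x = π⁻¹ (sw a x) := by
  rw [mul_inv_rev, Equiv.swap_inv, Equiv.Perm.mul_apply]

lemma sw_mul_sw_mul (a : ℕ) (π : Equiv.Perm ℕ) : sw a * (sw a * π) = π := by
  rw [← mul_assoc, Equiv.swap_mul_self, one_mul]

def Supp (n : ℕ) (π : Equiv.Perm ℕ) : Prop := ∀ x : ℕ, x ∉ Finset.Icc 1 n → π x = x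

lemma Supp.map_mem {n : ℕ} {π : Equiv.Perm ℕ} (h : Supp n π) {x : ℕ}
    (hx : x ∈ Finset.Icc 1 n) : π x ∈ Finset.Icc 1 n := by
  by_contra hc
  have h1 : π (π x) = π x := h _ hc
  have h2 : π x = x := π.injective h1
  rw [h2] at hc; exact hc hx

lemma Supp.inv {n : ℕ} {π : Equiv.Perm ℕ} (h : Supp n π) : Supp n π⁻¹ := by
  intro x hx
  have h1 : π x = x := h x hx
  conv_lhs => rw [← h1]
  exact Equiv.Perm.inv_apply_self π x

lemma Supp.inv_map_mem {n : ℕ} {π : Equiv.Perm ℕ} (h : Supp n π) {x : ℕ}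
    (hx : x ∈ Finset.Icc 1 n) : π⁻¹ x ∈ Finset.Icc 1 n := h.inv.map_mem hx

lemma Supp.mul {n : ℕ} {π σ : Equiv.Perm ℕ} (h : Supp n π) (h' : Supp n σ) :
    Supp n (π * σ) := by
  intro x hx
  rw [Equiv.Perm.mul_apply, h' x hx, h x hx]

lemma Supp.sw {n a : ℕ} (ha1 : 1 ≤ a) (ha2 : a + 1 ≤ n) : Supp n (sw a) := by
  intro x hx
  rw [sw_apply]
  simp only [Finset.mem_Icc] at hx
  split_ifs with h1 h2 <;> omega

lemma Supp.one {n : ℕ} : Supp n (1 : Equiv.Perm ℕ) := fun x _ => rfl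

/-- Inversion set. -/
def InvSet (n : ℕ) (π : Equiv.Perm ℕ) : Finset (ℕ × ℕ) :=
  (Finset.Icc 1 n ×ˢ Finset.Icc 1 n).filter
    (fun bc => bc.1 < bc.2 ∧ π⁻¹ bc.2 < π⁻¹ bc.1)

def invc (n : ℕ) (π : Equiv.Perm ℕ) : ℕ := (InvSet n π).card

lemma mem_invSet {n : ℕ} {π : Equiv.Perm ℕ} {b c : ℕ} :
    (b, c) ∈ InvSet n π ↔ (1 ≤ b ∧ b ≤ n) ∧ (1 ≤ c ∧ c ≤ n) ∧ b < c ∧ π⁻¹ c < π⁻¹ b := by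
  simp [InvSet, Finset.mem_Icc, and_assoc]

lemma invc_one (n : ℕ) : invc n 1 = 0 := by
  rw [invc, Finset.card_eq_zero]
  ext ⟨b, c⟩
  simp only [mem_invSet, Finset.notMem_empty, iff_false]
  rintro ⟨_, _, h1, h2⟩
  simp at h2; omega

lemma sw_lt_sw {a b c : ℕ} (hbc : b < c) (hne : ¬(b = a ∧ c = a + 1)) :
    sw a b < sw a c := by
  rw [sw_apply, sw_apply]
  split_ifs <;> omega

lemma sw_mem_Icc {n a b : ℕ} (ha1 : 1 ≤ a) (ha2 : a + 1 ≤ n) (hb : 1 ≤ b ∧ b ≤ n) :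
    1 ≤ sw a b ∧ sw a b ≤ n := by
  rw [sw_apply]; split_ifs <;> omega

lemma invset_erase_map {n a : ℕ} (ha1 : 1 ≤ a) (ha2 : a + 1 ≤ n) (π : Equiv.Perm ℕ)
    {b c : ℕ} (h : (b, c) ∈ (InvSet n (sw a * π)).erase (a, a+1)) :
    (sw a b, sw a c) ∈ (InvSet n π).erase (a, a+1) := by
  rw [Finset.mem_erase, mem_invSet] at h ⊢
  obtain ⟨hne, hb, hc, hbc, hinv⟩ := h
  have hne' : ¬(b = a ∧ c = a + 1) := by
    intro ⟨h1, h2⟩; exact hne (by rw [h1, h2])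
  refine ⟨?_, sw_mem_Icc ha1 ha2 hb, sw_mem_Icc ha1 ha2 hc, sw_lt_sw hbc hne', ?_⟩
  · intro hEq
    have h1 : sw a b = a := congrArg Prod.fst hEq
    have h2 : sw a c = a + 1 := congrArg Prod.snd hEq
    have hb' : b = a + 1 := by rw [← sw_sw a b, h1, sw_apply]; simp
    have hc' : c = a := by
      rw [← sw_sw a c, h2, sw_apply]
      split_ifs with h3 <;> omega
    omega
  · rw [inv_sw_mul, inv_sw_mul] at hinv; exact hinv

lemma invset_erase_card {n a : ℕ} (ha1 : 1 ≤ a) (ha2 : a + 1 ≤ n) (π : Equiv.Perm ℕ) :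
    ((InvSet n (sw a * π)).erase (a, a+1)).card = ((InvSet n π).erase (a, a+1)).card := by
  refine Finset.card_nbij' (fun bc => (sw a bc.1, sw a bc.2)) (fun bc => (sw a bc.1, sw a bc.2))
    ?_ ?_ ?_ ?_
  · rintro ⟨b, c⟩ h; exact invset_erase_map ha1 ha2 π h
  · rintro ⟨b, c⟩ h
    have := invset_erase_map ha1 ha2 (sw a * π) (b := b) (c := c)
    rw [sw_mul_sw_mul] at this
    exact this h
  · rintro ⟨b, c⟩ _; simp [sw_sw]
  · rintro ⟨b, c⟩ _; simp [sw_sw]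

lemma pair_mem_invset_sw {n a : ℕ} (ha1 : 1 ≤ a) (ha2 : a + 1 ≤ n) (π : Equiv.Perm ℕ) :
    ((a, a+1) ∈ InvSet n (sw a * π) ↔ ¬ ((a, a+1) ∈ InvSet n π)) := by
  have h1 : (sw a * π)⁻¹ (a+1) = π⁻¹ a := by
    rw [inv_sw_mul]; congr 1; rw [sw_apply]
    split_ifs <;> omega
  have h2 : (sw a * π)⁻¹ a = π⁻¹ (a+1) := by
    rw [inv_sw_mul]; congr 1; rw [sw_apply]; simp
  have hne : π⁻¹ a ≠ π⁻¹ (a+1) := fun h => by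
    have := π⁻¹.injective h; omega
  rw [mem_invSet, mem_invSet, h1, h2]
  constructor
  · rintro ⟨_, _, _, h⟩ ⟨_, _, _, h'⟩; omega
  · intro h
    refine ⟨⟨ha1, by omega⟩, ⟨by omega, ha2⟩, by omega, ?_⟩
    by_contra hc
    exact h ⟨⟨ha1, by omega⟩, ⟨by omega, ha2⟩, by omega, by omega⟩

lemma invc_toggle_desc {n a : ℕ} (ha1 : 1 ≤ a) (ha2 : a + 1 ≤ n) (π : Equiv.Perm ℕ)
    (hd : π⁻¹ (a+1) < π⁻¹ a) : invc n (sw a * π) + 1 = invc n π := by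
  have hmem : (a, a+1) ∈ InvSet n π :=
    mem_invSet.mpr ⟨⟨ha1, by omega⟩, ⟨by omega, ha2⟩, by omega, hd⟩
  have hnmem : (a, a+1) ∉ InvSet n (sw a * π) := by
    rw [pair_mem_invset_sw ha1 ha2]; simp [hmem]
  rw [invc, invc, ← Finset.card_erase_add_one hmem, ← invset_erase_card ha1 ha2 π,
    Finset.erase_eq_of_notMem hnmem]

lemma invc_toggle_asc {n a : ℕ} (ha1 : 1 ≤ a) (ha2 : a + 1 ≤ n) (π : Equiv.Perm ℕ)
    (hd : ¬ π⁻¹ (a+1) < π⁻¹ a) : invc n π + 1 = invc n (sw a * π) := by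
  have hnmem : (a, a+1) ∉ InvSet n π := by
    rw [mem_invSet]; rintro ⟨_, _, _, h⟩; exact hd h
  have hmem : (a, a+1) ∈ InvSet n (sw a * π) := by
    rw [pair_mem_invset_sw ha1 ha2]; exact hnmem
  rw [invc, invc, ← Finset.card_erase_add_one hmem, invset_erase_card ha1 ha2 π,
    Finset.erase_eq_of_notMem hnmem]

lemma invc_le_length {n : ℕ} (L : List ℕ) (hL : ∀ m ∈ L, m ∈ Finset.Icc 1 (n-1)) :
    invc n (wordProd L) ≤ L.length := by
  induction L with
  | nil => rw [wordProd_nil, invc_one]; simp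
  | cons a L ih =>
      have ha := hL a (by simp)
      rw [Finset.mem_Icc] at ha
      have ha1 : 1 ≤ a := ha.1
      have ha2 : a + 1 ≤ n := by omega
      have ihL := ih (fun m hm => hL m (by simp [hm]))
      rw [wordProd_cons]
      by_cases hd : (wordProd L)⁻¹ (a+1) < (wordProd L)⁻¹ a
      · have := invc_toggle_desc ha1 ha2 (wordProd L) hd
        simp only [List.length_cons]; omega
      · have := invc_toggle_asc ha1 ha2 (wordProd L) hd
        simp only [List.length_cons]; omega

lemma descent_exists {n : ℕ} {π : Equiv.Perm ℕ} (h : Supp n π) (hπ : π ≠ 1) :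
    ∃ a, 1 ≤ a ∧ a + 1 ≤ n ∧ π⁻¹ (a+1) < π⁻¹ a := by
  by_contra hc
  push_neg at hc
  -- π⁻¹ is strictly monotone on [1,n], hence ≥ id there
  have hmono : ∀ a, 1 ≤ a → a + 1 ≤ n → π⁻¹ a < π⁻¹ (a+1) := by
    intro a h1 h2
    have h3 := hc a h1 h2
    have h4 : π⁻¹ a ≠ π⁻¹ (a+1) := fun hEq => by
      have := π⁻¹.injective hEq; omega
    omega
  have hge : ∀ a, 1 ≤ a → a ≤ n → a ≤ π⁻¹ a := by
    intro a
    induction a with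
    | zero => omega
    | succ b ih =>
        intro h1 h2
        by_cases hb : 1 ≤ b
        · have := ih hb (by omega)
          have := hmono b hb (by omega)
          omega
        · have hb0 : b = 0 := by omega
          subst hb0
          have := h.inv_map_mem (x := 1) (by simp [Finset.mem_Icc]; omega)
          rw [Finset.mem_Icc] at this
          simpa using this.1
  have hle : ∀ a, 1 ≤ a → a ≤ n → π a ≤ a := by
    intro a h1 h2
    have ha : π a ∈ Finset.Icc 1 n := h.map_mem (by rw [Finset.mem_Icc]; omega)
    rw [Finset.mem_Icc] at ha
    have := hge (π a) ha.1 ha.2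
    rw [Equiv.Perm.inv_apply_self] at this
    exact this
  -- now π a = a for all a in [1,n] by strong induction
  have hid : ∀ a, a ≤ n → ∀ b, b ≤ a → 1 ≤ b → π b = b := by
    intro a
    induction a with
    | zero => omega
    | succ c ih =>
        intro hcn b hb h1b
        by_cases hbc : b ≤ c
        · exact ih (by omega) b hbc h1b
        · have hbe : b = c + 1 := by omega
          have hub := hle b h1b (by omega)
          have hlb : π b ∈ Finset.Icc 1 n := h.map_mem (by rw [Finset.mem_Icc]; omega)
          rw [Finset.mem_Icc] at hlb
          by_contra hne
          have hlt : π b < b := by omega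
          have : π (π b) = π b := ih (by omega) (π b) (by omega) hlb.1
          have := π.injective this
          omega
  apply hπ
  apply Equiv.ext
  intro x
  by_cases hx : x ∈ Finset.Icc 1 n
  · rw [Finset.mem_Icc] at hx
    exact hid n le_rfl x hx.2 hx.1
  · exact h x hx

lemma exists_word_aux {n : ℕ} : ∀ N (π : Equiv.Perm ℕ), Supp n π → invc n π ≤ N →
    ∃ L : List ℕ, (∀ m ∈ L, m ∈ Finset.Icc 1 (n-1)) ∧ wordProd L = π ∧
      L.length = invc n π := by
  intro N
  induction N with
  | zero =>
      intro π hs hle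
      by_cases hπ : π = 1
      · exact ⟨[], by simp, by rw [wordProd_nil, hπ], by simp [hπ, invc_one]⟩
      · obtain ⟨a, ha1, ha2, hd⟩ := descent_exists hs hπ
        have := invc_toggle_desc ha1 ha2 π hd
        omega
  | succ N ih =>
      intro π hs hle
      by_cases hπ : π = 1
      · exact ⟨[], by simp, by rw [wordProd_nil, hπ], by simp [hπ, invc_one]⟩
      · obtain ⟨a, ha1, ha2, hd⟩ := descent_exists hs hπ
        have htog := invc_toggle_desc ha1 ha2 π hd
        have hssupp : Supp n (sw a * π) := (Supp.sw ha1 ha2).mul hs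
        obtain ⟨L, hL1, hL2, hL3⟩ := ih (sw a * π) hssupp (by omega)
        refine ⟨a :: L, ?_, ?_, ?_⟩
        · intro m hm
          rcases List.mem_cons.mp hm with h | h
          · subst h; rw [Finset.mem_Icc]; omega
          · exact hL1 m h
        · rw [wordProd_cons, hL2, sw_mul_sw_mul]
        · simp only [List.length_cons]; omega

lemma isRWord_iff {n : ℕ} {π : Equiv.Perm ℕ} (hs : Supp n π) (L : List ℕ) :
    IsRWord n π L ↔ (∀ m ∈ L, m ∈ Finset.Icc 1 (n-1)) ∧ wordProd L = π ∧
      L.length = invc n π := by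
  obtain ⟨M, hM1, hM2, hM3⟩ := exists_word_aux (invc n π) π hs le_rfl
  constructor
  · rintro ⟨h1, h2, h3⟩
    refine ⟨h1, h2, le_antisymm ?_ ?_⟩
    · have := h3 M hM1 hM2; omega
    · have := invc_le_length L h1; rw [h2] at this; exact this
  · rintro ⟨h1, h2, h3⟩
    refine ⟨h1, h2, fun L' hL'1 hL'2 => ?_⟩
    have := invc_le_length L' hL'1
    rw [hL'2] at this
    omega

lemma isRWord_cons {n : ℕ} {π : Equiv.Perm ℕ} {a : ℕ} {L : List ℕ} (hs : Supp n π)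
    (h : IsRWord n π (a :: L)) :
    1 ≤ a ∧ a + 1 ≤ n ∧ π⁻¹ (a+1) < π⁻¹ a ∧ IsRWord n (sw a * π) L := by
  rw [isRWord_iff hs] at h
  obtain ⟨h1, h2, h3⟩ := h
  have ha := h1 a (by simp)
  rw [Finset.mem_Icc] at ha
  have ha1 : 1 ≤ a := ha.1
  have ha2 : a + 1 ≤ n := by omega
  have hL1 : ∀ m ∈ L, m ∈ Finset.Icc 1 (n-1) := fun m hm => h1 m (by simp [hm])
  have hprod : wordProd L = sw a * π := by
    rw [← h2, wordProd_cons, sw_mul_sw_mul]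
  have hssupp : Supp n (sw a * π) := (Supp.sw ha1 ha2).mul hs
  have hlen := invc_le_length L hL1
  rw [hprod] at hlen
  simp only [List.length_cons] at h3
  by_cases hd : π⁻¹ (a+1) < π⁻¹ a
  · have htog := invc_toggle_desc ha1 ha2 π hd
    refine ⟨ha1, ha2, hd, ?_⟩
    rw [isRWord_iff hssupp]
    exact ⟨hL1, hprod, by omega⟩
  · have htog := invc_toggle_asc ha1 ha2 π hd
    omega

lemma Urun_cons (j a : ℕ) (L : List ℕ) :
    Urun j (a :: L) = List.foldl Ustep (Ustep (.healthy j) a) L := rfl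

lemma foldl_dead (L : List ℕ) : L.foldl Ustep .dead = .dead := by
  induction L with
  | nil => rfl
  | cons a L ih => simpa [Ustep] using ih

lemma foldl_ill (m : ℕ) (L : List ℕ) :
    L.foldl Ustep (.ill m) = if m ∈ L then .dead else .ill m := by
  induction L with
  | nil => simp
  | cons a L ih =>
      by_cases h : a = m
      · subst h
        simp [List.foldl_cons, Ustep, foldl_dead]
      · rw [List.foldl_cons]
        have : Ustep (.ill m) a = .ill m := by simp [Ustep, h]
        rw [this, ih]
        have : (m ∈ a :: L) ↔ (m ∈ L) := by
          simp [List.mem_cons]; intro hm; omega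
        simp only [this]

lemma word_preserve {n j : ℕ} (L : List ℕ) (hL : ∀ m ∈ L, m ∈ Finset.Icc 1 (n-1))
    (hj : j ∉ L) : ∀ x, x ≤ j → wordProd L x ≤ j := by
  induction L with
  | nil => intro x hx; simpa [wordProd_nil] using hx
  | cons a L ih =>
      intro x hx
      have ha := hL a (by simp)
      rw [Finset.mem_Icc] at ha
      have haj : a ≠ j := fun h => hj (by simp [h])
      have hy : wordProd L x ≤ j :=
        ih (fun m hm => hL m (by simp [hm])) (fun h => hj (by simp [h])) x hx
      rw [wordProd_cons, Equiv.Perm.mul_apply, sw_apply]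
      split_ifs <;> omega

def Cross (n j : ℕ) (σ : Equiv.Perm ℕ) : Prop :=
  ∃ b k, 1 ≤ b ∧ b ≤ j ∧ j < k ∧ k ≤ n ∧ σ⁻¹ k < σ⁻¹ b

lemma not_cross_of_not_mem {n j : ℕ} {L : List ℕ} {σ : Equiv.Perm ℕ}
    (hL : ∀ m ∈ L, m ∈ Finset.Icc 1 (n-1)) (hprod : wordProd L = σ)
    (hj : j ∉ L) : ¬ Cross n j σ := by
  rintro ⟨b, k, hb1, hbj, hjk, hkn, hlt⟩
  have hrev : wordProd L.reverse = σ⁻¹ := by rw [wordProd_reverse, hprod]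
  have hrevL : ∀ m ∈ L.reverse, m ∈ Finset.Icc 1 (n-1) := by
    intro m hm; exact hL m (List.mem_reverse.mp hm)
  have hjrev : j ∉ L.reverse := fun h => hj (List.mem_reverse.mp h)
  have hb : σ⁻¹ b ≤ j := by
    rw [← hrev]; exact word_preserve L.reverse hrevL hjrev b hbj
  have hk : σ⁻¹ k ≤ j := by omega
  have : σ (σ⁻¹ k) ≤ j := by
    rw [← hprod]
    exact word_preserve L hL hj _ (by rw [hprod]; exact hk)
  rw [Equiv.Perm.apply_inv_self] at this
  omega

lemma mem_of_cross {n j : ℕ} {L : List ℕ} {σ : Equiv.Perm ℕ}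
    (hL : ∀ m ∈ L, m ∈ Finset.Icc 1 (n-1)) (hprod : wordProd L = σ)
    (hC : Cross n j σ) : j ∈ L := by
  by_contra h
  exact not_cross_of_not_mem hL hprod h hC

lemma not_mem_of_reduced {n j : ℕ} (hj : 1 ≤ j) : ∀ (L : List ℕ) (σ : Equiv.Perm ℕ),
    Supp n σ → IsRWord n σ L → ¬ Cross n j σ → j ∉ L := by
  intro L
  induction L with
  | nil => simp
  | cons a L ih =>
      intro σ hs hR hC
      obtain ⟨ha1, ha2, hd, hR'⟩ := isRWord_cons hs hR
      have haj : a ≠ j := by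
        intro h
        subst h
        exact hC ⟨a, a+1, ha1, le_rfl, by omega, ha2, hd⟩
      have hssupp : Supp n (sw a * σ) := (Supp.sw ha1 ha2).mul hs
      have hC' : ¬ Cross n j (sw a * σ) := by
        rintro ⟨b, k, hb1, hbj, hjk, hkn, hlt⟩
        rw [inv_sw_mul, inv_sw_mul] at hlt
        refine hC ⟨sw a b, sw a k, ?_, ?_, ?_, ?_, hlt⟩ <;>
          · rw [sw_apply]
            split_ifs <;> omega
      have := ih (sw a * σ) hssupp hR' hC'
      simp only [List.mem_cons]
      rintro (h | h)
      · exact haj h.symm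
      · exact this h

def Apred (j : ℕ) (π : Equiv.Perm ℕ) : Prop := ∃ i, 1 ≤ i ∧ i < j ∧ π⁻¹ j < π⁻¹ i

def Bpred (n j : ℕ) (π : Equiv.Perm ℕ) : Prop := ∃ k, j < k ∧ k ≤ n ∧ π⁻¹ k < π⁻¹ j

def Kpred (n j : ℕ) (π : Equiv.Perm ℕ) : Prop :=
  ∃ p u r, 1 ≤ p ∧ p < u ∧ u < r ∧ r ≤ n ∧ π p = j ∧ j < π u ∧ π r < j

def mval (n j : ℕ) (π : Equiv.Perm ℕ) : ℕ :=
  j + ((Finset.Icc (j+1) n).filter (fun k => π⁻¹ k < π⁻¹ j)).card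

lemma kpred_iff {n j : ℕ} {π : Equiv.Perm ℕ} (hs : Supp n π) (hj1 : 1 ≤ j) (hjn : j ≤ n) :
    Kpred n j π ↔ ∃ v w, j < v ∧ v ≤ n ∧ 1 ≤ w ∧ w < j ∧ π⁻¹ j < π⁻¹ v ∧ π⁻¹ v < π⁻¹ w := by
  constructor
  · rintro ⟨p, u, r, hp1, hpu, hur, hrn, hπp, hπu, hπr⟩
    have hpinv : π⁻¹ j = p := by rw [← hπp, Equiv.Perm.inv_apply_self]
    have huinv : π⁻¹ (π u) = u := Equiv.Perm.inv_apply_self π u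
    have hrinv : π⁻¹ (π r) = r := Equiv.Perm.inv_apply_self π r
    have hu : π u ∈ Finset.Icc 1 n := hs.map_mem (by rw [Finset.mem_Icc]; omega)
    have hr : π r ∈ Finset.Icc 1 n := hs.map_mem (by rw [Finset.mem_Icc]; omega)
    rw [Finset.mem_Icc] at hu hr
    exact ⟨π u, π r, hπu, hu.2, hr.1, hπr, by omega, by omega⟩
  · rintro ⟨v, w, hjv, hvn, hw1, hwj, h1, h2⟩
    have hp : π⁻¹ j ∈ Finset.Icc 1 n := hs.inv_map_mem (by rw [Finset.mem_Icc]; omega)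
    have hr : π⁻¹ w ∈ Finset.Icc 1 n := hs.inv_map_mem (by rw [Finset.mem_Icc]; omega)
    rw [Finset.mem_Icc] at hp hr
    refine ⟨π⁻¹ j, π⁻¹ v, π⁻¹ w, hp.1, h1, h2, hr.2, ?_, ?_, ?_⟩
    · exact Equiv.Perm.apply_inv_self π j
    · rw [Equiv.Perm.apply_inv_self]; exact hjv
    · rw [Equiv.Perm.apply_inv_self]; exact hwj

lemma contains_iff {n j : ℕ} {π : Equiv.Perm ℕ} (hs : Supp n π) (hj1 : 1 ≤ j) (hjn : j ≤ n) :
    (∃ p r : ℕ, 1 ≤ p ∧ p < r ∧ r ≤ n ∧ π p = j ∧ π r < j) ↔ Apred j π := by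
  constructor
  · rintro ⟨p, r, hp1, hpr, hrn, hπp, hπr⟩
    have hpinv : π⁻¹ j = p := by rw [← hπp, Equiv.Perm.inv_apply_self]
    have hrinv : π⁻¹ (π r) = r := Equiv.Perm.inv_apply_self π r
    have hr : π r ∈ Finset.Icc 1 n := hs.map_mem (by rw [Finset.mem_Icc]; omega)
    rw [Finset.mem_Icc] at hr
    exact ⟨π r, hr.1, hπr, by omega⟩
  · rintro ⟨i, hi1, hij, hlt⟩
    have hp : π⁻¹ j ∈ Finset.Icc 1 n := hs.inv_map_mem (by rw [Finset.mem_Icc]; omega)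
    have hr : π⁻¹ i ∈ Finset.Icc 1 n := hs.inv_map_mem (by rw [Finset.mem_Icc]; omega)
    rw [Finset.mem_Icc] at hp hr
    refine ⟨π⁻¹ j, π⁻¹ i, hp.1, hlt, hr.2, Equiv.Perm.apply_inv_self π j, ?_⟩
    rw [Equiv.Perm.apply_inv_self]; exact hij

lemma Kpred.apred {n j : ℕ} {π : Equiv.Perm ℕ} (hs : Supp n π) (hj1 : 1 ≤ j) (hjn : j ≤ n)
    (hK : Kpred n j π) : Apred j π := by
  obtain ⟨v, w, _, _, hw1, hwj, h1, h2⟩ := (kpred_iff hs hj1 hjn).mp hK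
  exact ⟨w, hw1, hwj, by omega⟩

lemma sw_fix {a x : ℕ} (h1 : x ≠ a) (h2 : x ≠ a + 1) : sw a x = x :=
  Equiv.swap_apply_of_ne_of_ne h1 h2

lemma kpred_le {n j : ℕ} {π : Equiv.Perm ℕ} (hK : Kpred n j π) (hs : Supp n π) :
    j ≤ n := by
  obtain ⟨p, u, r, hp1, hpu, hur, hrn, hπp, _, _⟩ := hK
  have := hs.map_mem (x := p) (by rw [Finset.mem_Icc]; omega)
  rw [Finset.mem_Icc, hπp] at this
  exact this.2

lemma main {n : ℕ} : ∀ (L : List ℕ) (j : ℕ) (π : Equiv.Perm ℕ), 2 ≤ j → Supp n π →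
    IsRWord n π L →
    ((¬ Apred j π → Urun j L = .healthy (mval n j π)) ∧
     (Apred j π → Urun j L = .ill (mval n j π) ∨ Urun j L = .dead) ∧
     (¬ Bpred n j π → ¬ Kpred n j π → Urun j L ≠ .dead) ∧
     (¬ Bpred n j π → Kpred n j π → Urun j L = .dead)) := by
  intro L
  induction L with
  | nil =>
      intro j π hj hs hR
      have hπ1 : π = 1 := by rw [← hR.2.1, wordProd_nil]
      subst hπ1
      have hmv : mval n j 1 = j := by
        rw [mval]
        have : ((Finset.Icc (j+1) n).filter (fun k => (1 : Equiv.Perm ℕ)⁻¹ k < (1 : Equiv.Perm ℕ)⁻¹ j)) = ∅ := by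
          apply Finset.filter_false_of_mem
          intro k hk
          rw [Finset.mem_Icc] at hk
          simp only [inv_one, Equiv.Perm.one_apply]
          omega
        rw [this]; simp
      have hA : ¬ Apred j 1 := by
        rintro ⟨i, h1, h2, h3⟩
        simp only [inv_one, Equiv.Perm.one_apply] at h3
        omega
      have hK : ¬ Kpred n j 1 := by
        rintro ⟨p, u, r, h1, h2, h3, h4, h5, h6, h7⟩
        simp only [Equiv.Perm.one_apply] at h5 h7
        omega
      refine ⟨fun _ => by rw [hmv]; rfl, fun h => absurd h hA, fun _ _ => by
        show AState.healthy j ≠ AState.dead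
        simp, fun _ h => absurd h hK⟩
  | cons a L ih =>
      intro j π hj hs hR
      obtain ⟨ha1, ha2, hd, hR'⟩ := isRWord_cons hs hR
      set σ := sw a * π with hσ
      have hssupp : Supp n σ := (Supp.sw ha1 ha2).mul hs
      have hinv : ∀ x, σ⁻¹ x = π⁻¹ (sw a x) := fun x => inv_sw_mul a π x
      by_cases haj : a = j
      · -- first letter is j : advance to healthy (j+1)
        subst haj
        have hUrun : Urun a (a :: L) = Urun (a+1) L := by
          rw [Urun_cons]
          have : Ustep (.healthy a) a = .healthy (a+1) := by simp [Ustep]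
          rw [this]; rfl
        have hB : Bpred n a π := ⟨a+1, by omega, ha2, hd⟩
        have hswa : sw a (a+1) = a := by rw [sw_apply]; split_ifs <;> omega
        have hAiff : Apred (a+1) σ ↔ Apred a π := by
          constructor
          · rintro ⟨i, h1, h2, h3⟩
            rw [hinv, hinv, hswa] at h3
            by_cases hia : i = a
            · subst hia
              rw [Equiv.swap_apply_left] at h3
              omega
            · have : sw a i = i := sw_fix hia (by omega)
              rw [this] at h3
              exact ⟨i, h1, by omega, h3⟩
          · rintro ⟨i, h1, h2, h3⟩
            refine ⟨i, h1, by omega, ?_⟩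
            rw [hinv, hinv, hswa]
            have : sw a i = i := sw_fix (by omega) (by omega)
            rw [this]
            exact h3
        have hicc : Finset.Icc (a+1) n = insert (a+1) (Finset.Icc (a+2) n) := by
          ext x
          simp only [Finset.mem_Icc, Finset.mem_insert]
          omega
        have hmeq : mval n (a+1) σ = mval n a π := by
          rw [mval, mval, hicc]
          rw [Finset.filter_insert, if_pos hd, Finset.card_insert_of_notMem (by
            simp only [Finset.mem_filter, Finset.mem_Icc]
            omega)]
          have hfeq : (Finset.Icc (a+1+1) n).filter (fun k => σ⁻¹ k < σ⁻¹ (a+1)) =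
              (Finset.Icc (a+2) n).filter (fun k => π⁻¹ k < π⁻¹ a) := by
            apply Finset.filter_congr
            intro k hk
            rw [Finset.mem_Icc] at hk
            rw [hinv, hinv, hswa, sw_fix (by omega) (by omega)]
          rw [hfeq]
          omega
        obtain ⟨I1, I2, _, _⟩ := ih (a+1) σ (by omega) hssupp hR'
        refine ⟨?_, ?_, fun h => absurd hB h, fun h => absurd hB h⟩
        · intro hA
          rw [hUrun, I1 (fun h => hA (hAiff.mp h)), hmeq]
        · intro hA
          rcases I2 (hAiff.mpr hA) with h | h
          · left; rw [hUrun, h, hmeq]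
          · right; rw [hUrun, h]
      · by_cases haj1 : a + 1 = j
        · -- first letter is j-1 : go ill
          have hUill : Urun j (a :: L) = if j ∈ L then .dead else .ill j := by
            rw [Urun_cons]
            have : Ustep (.healthy j) a = .ill j := by simp [Ustep, haj, haj1]
            rw [this, foldl_ill]
          have hA : Apred j π := ⟨a, ha1, by omega, by rw [← haj1]; exact hd⟩
          have hprodL : wordProd L = σ := hR'.2.1
          have hLlet : ∀ m ∈ L, m ∈ Finset.Icc 1 (n-1) := hR'.1
          have hjn : j ≤ n := by omega
          have hj1 : 1 ≤ j := by omega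
          have hswj : sw a j = a := by rw [← haj1, sw_apply]; split_ifs <;> omega
          -- (S2) : Kpred π → Cross σ
          have hS2 : Kpred n j π → Cross n j σ := by
            intro hK
            obtain ⟨v, w, hjv, hvn, hw1, hwj, h1, h2⟩ := (kpred_iff hs hj1 hjn).mp hK
            by_cases hwa : w = a
            · refine ⟨j, v, hj1, le_rfl, hjv, hvn, ?_⟩
              rw [hinv, hinv, hswj, sw_fix (by omega) (by omega), ← hwa] at *
              omega
            · refine ⟨w, v, hw1, by omega, hjv, hvn, ?_⟩
              rw [hinv, hinv, sw_fix (by omega) (by omega),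
                sw_fix hwa (by omega)]
              exact h2
          -- (S1) : Cross σ → Bpred π ∨ Kpred π
          have hS1 : Cross n j σ → Bpred n j π ∨ Kpred n j π := by
            rintro ⟨b, k, hb1, hbj, hjk, hkn, hlt⟩
            rw [hinv, hinv, sw_fix (by omega) (by omega)] at hlt
            by_cases hba : b = a
            · subst hba
              rw [sw_apply] at hlt
              simp only [if_pos rfl, haj1] at hlt
              exact Or.inl ⟨k, hjk, hkn, hlt⟩
            · by_cases hBc : π⁻¹ k < π⁻¹ j
              · exact Or.inl ⟨k, hjk, hkn, hBc⟩
              · right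
                have hkj : π⁻¹ k ≠ π⁻¹ j := fun h => by
                  have := π⁻¹.injective h; omega
                rw [kpred_iff hs hj1 hjn]
                by_cases hbj' : b = j
                · refine ⟨k, a, hjk, hkn, ha1, by omega, by omega, ?_⟩
                  rw [hbj', hswj] at hlt
                  exact hlt
                · refine ⟨k, b, hjk, hkn, hb1, by omega, by omega, ?_⟩
                  rw [sw_fix hba (by omega)] at hlt
                  exact hlt
          by_cases hm : j ∈ L
          · rw [hUill, if_pos hm]
            refine ⟨fun h => absurd hA h, fun _ => Or.inr rfl, ?_, fun _ _ => rfl⟩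
            intro hnB hnK
            have hnC : ¬ Cross n j σ := by
              intro hC
              rcases hS1 hC with h | h
              · exact hnB h
              · exact hnK h
            exact absurd hm (not_mem_of_reduced hj1 L σ hssupp hR' hnC)
          · rw [hUill, if_neg hm]
            -- show ¬ Bpred and mval = j
            have hrev : wordProd L.reverse = σ⁻¹ := by rw [wordProd_reverse, hprodL]
            have hrevL : ∀ m ∈ L.reverse, m ∈ Finset.Icc 1 (n-1) := fun m hmm =>
              hLlet m (List.mem_reverse.mp hmm)
            have hjrev : j ∉ L.reverse := fun h => hm (List.mem_reverse.mp h)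
            have hπj : π⁻¹ j = σ⁻¹ a := by
              rw [hinv, Equiv.swap_apply_left, haj1]
            have hπk : ∀ k, j < k → π⁻¹ k = σ⁻¹ k := by
              intro k hk
              rw [hinv, sw_fix (by omega) (by omega)]
            have hkey : ∀ k, j < k → k ≤ n → π⁻¹ j < π⁻¹ k := by
              intro k hjk hkn
              have h1 : σ⁻¹ a ≤ j := by
                have := word_preserve L.reverse hrevL hjrev a (by omega)
                rw [hrev] at this
                exact this
              have h2 : ¬ σ⁻¹ k ≤ j := by
                intro hc
                have := word_preserve L hLlet hm (σ⁻¹ k) hc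
                rw [hprodL, Equiv.Perm.apply_inv_self] at this
                omega
              rw [hπj, hπk k hjk]
              omega
            have hnB : ¬ Bpred n j π := by
              rintro ⟨k, h1, h2, h3⟩
              have := hkey k h1 h2
              omega
            have hmv : mval n j π = j := by
              rw [mval]
              have : ((Finset.Icc (j+1) n).filter (fun k => π⁻¹ k < π⁻¹ j)) = ∅ := by
                apply Finset.filter_false_of_mem
                intro k hk
                rw [Finset.mem_Icc] at hk
                have := hkey k (by omega) hk.2
                omega
              rw [this]; simp
            refine ⟨fun h => absurd hA h, fun _ => Or.inl (by rw [hmv]), fun _ _ => by simp, ?_⟩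
            intro _ hK
            exact absurd (mem_of_cross hLlet hprodL (hS2 hK)) hm
        · -- first letter away from j : state unchanged
          have hUrun : Urun j (a :: L) = Urun j L := by
            rw [Urun_cons]
            have : Ustep (.healthy j) a = .healthy j := by simp [Ustep, haj, haj1]
            rw [this]; rfl
          have hswj : sw a j = j := sw_fix (fun h => haj h.symm) (by omega)
          have hswlt : ∀ i, 1 ≤ i → i < j → 1 ≤ sw a i ∧ sw a i < j := by
            intro i h1 h2
            rw [sw_apply]; split_ifs <;> omega
          have hswgt : ∀ k, j < k → k ≤ n → j < sw a k ∧ sw a k ≤ n := by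
            intro k h1 h2
            rw [sw_apply]; split_ifs <;> omega
          have hAiff : Apred j σ ↔ Apred j π := by
            constructor
            · rintro ⟨i, h1, h2, h3⟩
              rw [hinv, hinv, hswj] at h3
              obtain ⟨g1, g2⟩ := hswlt i h1 h2
              exact ⟨sw a i, g1, g2, h3⟩
            · rintro ⟨i, h1, h2, h3⟩
              obtain ⟨g1, g2⟩ := hswlt i h1 h2
              refine ⟨sw a i, g1, g2, ?_⟩
              rw [hinv, hinv, hswj, sw_sw]
              exact h3
          have hBiff : Bpred n j σ ↔ Bpred n j π := by
            constructor
            · rintro ⟨k, h1, h2, h3⟩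
              rw [hinv, hinv, hswj] at h3
              obtain ⟨g1, g2⟩ := hswgt k h1 h2
              exact ⟨sw a k, g1, g2, h3⟩
            · rintro ⟨k, h1, h2, h3⟩
              obtain ⟨g1, g2⟩ := hswgt k h1 h2
              refine ⟨sw a k, g1, g2, ?_⟩
              rw [hinv, hinv, hswj, sw_sw]
              exact h3
          have hKiff : Kpred n j σ ↔ Kpred n j π := by
            constructor
            · intro hK
              have hjn : j ≤ n := kpred_le hK hssupp
              rw [kpred_iff hssupp (by omega) hjn] at hK
              rw [kpred_iff hs (by omega) hjn]
              obtain ⟨v, w, h1, h2, h3, h4, h5, h6⟩ := hK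
              rw [hinv, hinv, hswj] at h5
              rw [hinv, hinv] at h6
              obtain ⟨g1, g2⟩ := hswgt v h1 h2
              obtain ⟨g3, g4⟩ := hswlt w h3 h4
              exact ⟨sw a v, sw a w, g1, g2, g3, g4, h5, h6⟩
            · intro hK
              have hjn : j ≤ n := kpred_le hK hs
              rw [kpred_iff hs (by omega) hjn] at hK
              rw [kpred_iff hssupp (by omega) hjn]
              obtain ⟨v, w, h1, h2, h3, h4, h5, h6⟩ := hK
              obtain ⟨g1, g2⟩ := hswgt v h1 h2
              obtain ⟨g3, g4⟩ := hswlt w h3 h4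
              refine ⟨sw a v, sw a w, g1, g2, g3, g4, ?_, ?_⟩
              · rw [hinv, hinv, hswj, sw_sw]; exact h5
              · rw [hinv, hinv, sw_sw, sw_sw]; exact h6
          have hmeq : mval n j σ = mval n j π := by
            rw [mval, mval]
            congr 1
            refine Finset.card_nbij' (fun k => sw a k) (fun k => sw a k) ?_ ?_ ?_ ?_
            · intro k hk
              dsimp only
              rw [Finset.mem_coe, Finset.mem_filter, Finset.mem_Icc] at hk ⊢
              obtain ⟨⟨g1, g2⟩, g3⟩ := hk
              rw [hinv, hinv, hswj] at g3
              obtain ⟨e1, e2⟩ := hswgt k (by omega) g2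
              exact ⟨⟨by omega, e2⟩, g3⟩
            · intro k hk
              dsimp only
              rw [Finset.mem_coe, Finset.mem_filter, Finset.mem_Icc] at hk ⊢
              obtain ⟨⟨g1, g2⟩, g3⟩ := hk
              obtain ⟨e1, e2⟩ := hswgt k (by omega) g2
              refine ⟨⟨by omega, e2⟩, ?_⟩
              rw [hinv, hinv, hswj, sw_sw]
              exact g3
            · intro k _; exact sw_sw a k
            · intro k _; exact sw_sw a k
          obtain ⟨I1, I2, I3, I4⟩ := ih j σ hj hssupp hR'
          refine ⟨?_, ?_, ?_, ?_⟩
          · intro hA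
            rw [hUrun, I1 (fun h => hA (hAiff.mp h)), hmeq]
          · intro hA
            rcases I2 (hAiff.mpr hA) with h | h
            · left; rw [hUrun, h, hmeq]
            · right; rw [hUrun, h]
          · intro hnB hnK
            rw [hUrun]
            exact I3 (fun h => hnB (hBiff.mp h)) (fun h => hnK (hKiff.mp h))
          · intro hnB hK
            rw [hUrun]
            exact I4 (fun h => hnB (hBiff.mp h)) (hKiff.mpr hK)

/-- All reduced words of a permutation `π` accepted by `𝕌(j)` are accepted at the same
state; more precisely, with `inv^j(π) = {(i,j) : i < j, π⁻¹(i) > π⁻¹(j)}` and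
`inv_j(π) = {(j,k) : j < k, π⁻¹(j) > π⁻¹(k)}`:
if `inv^j(π) = ∅` all reduced words of `π` end at the same healthy state;
if `inv_j(π) = ∅` all reduced words end at the same state, which is healthy if `π`
avoids `ji`, ill if `π` contains `ji` but avoids `jki`, and dead if `π` contains `jki`;
and otherwise all accepted reduced words end at the same ill state. -/
theorem permutree_automaton_same_state (n j : ℕ) (hj2 : 2 ≤ j) (hjn : j ≤ n - 1)
    (π : Equiv.Perm ℕ) (hπ : ∀ x : ℕ, x ∉ Finset.Icc 1 n → π x = x) :
    (∀ L L' : List ℕ, IsRWord n π L → IsRWord n π L' →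
      Urun j L ≠ AState.dead → Urun j L' ≠ AState.dead → Urun j L = Urun j L') ∧
    ((∀ i : ℕ, 1 ≤ i → i < j → ¬ π.symm j < π.symm i) →
      ∃ m : ℕ, ∀ L : List ℕ, IsRWord n π L → Urun j L = AState.healthy m) ∧
    ((∀ k : ℕ, j < k → k ≤ n → ¬ π.symm k < π.symm j) →
      ∃ q : AState, (∀ L : List ℕ, IsRWord n π L → Urun j L = q) ∧
        ((¬(∃ p r : ℕ, 1 ≤ p ∧ p < r ∧ r ≤ n ∧ π p = j ∧ π r < j) →
            ∃ m : ℕ, q = AState.healthy m) ∧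
         ((∃ p r : ℕ, 1 ≤ p ∧ p < r ∧ r ≤ n ∧ π p = j ∧ π r < j) →
          ¬(∃ p u r : ℕ, 1 ≤ p ∧ p < u ∧ u < r ∧ r ≤ n ∧ π p = j ∧ j < π u ∧ π r < j) →
            ∃ m : ℕ, q = AState.ill m) ∧
         ((∃ p u r : ℕ, 1 ≤ p ∧ p < u ∧ u < r ∧ r ≤ n ∧ π p = j ∧ j < π u ∧ π r < j) →
            q = AState.dead))) ∧
    ((∃ i : ℕ, 1 ≤ i ∧ i < j ∧ π.symm j < π.symm i) →
     (∃ k : ℕ, j < k ∧ k ≤ n ∧ π.symm k < π.symm j) →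
      ∃ m : ℕ, ∀ L : List ℕ, IsRWord n π L → Urun j L ≠ AState.dead →
        Urun j L = AState.ill m) := by
  have hs : Supp n π := fun x hx => hπ x hx
  have hj1 : 1 ≤ j := by omega
  have hjn' : j ≤ n := by omega
  have hsymm : ∀ x, π.symm x = π⁻¹ x := fun x => rfl
  refine ⟨?_, ?_, ?_, ?_⟩
  · -- all accepted reduced words end at the same state
    intro L L' hL hL' hnd hnd'
    by_cases hA : Apred j π
    · rcases (main L j π hj2 hs hL).2.1 hA with h | h
      · rcases (main L' j π hj2 hs hL').2.1 hA with h' | h'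
        · rw [h, h']
        · exact absurd h' hnd'
      · exact absurd h hnd
    · rw [(main L j π hj2 hs hL).1 hA, (main L' j π hj2 hs hL').1 hA]
  · -- no inversion (i,j)
    intro h
    have hA : ¬ Apred j π := by
      rintro ⟨i, h1, h2, h3⟩
      exact h i h1 h2 (by rw [hsymm, hsymm]; exact h3)
    exact ⟨mval n j π, fun L hL => (main L j π hj2 hs hL).1 hA⟩
  · -- no inversion (j,k)
    intro h
    have hnB : ¬ Bpred n j π := by
      rintro ⟨k, h1, h2, h3⟩
      exact h k h1 h2 (by rw [hsymm, hsymm]; exact h3)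
    by_cases hK : Kpred n j π
    · refine ⟨AState.dead, fun L hL => (main L j π hj2 hs hL).2.2.2 hnB hK, ?_, ?_, fun _ => rfl⟩
      · intro hnc
        exact absurd ((contains_iff hs hj1 hjn').mpr (hK.apred hs hj1 hjn')) hnc
      · intro _ hnK
        exact absurd hK hnK
    · by_cases hA : Apred j π
      · refine ⟨AState.ill (mval n j π), fun L hL => ?_, ?_, fun _ _ => ⟨mval n j π, rfl⟩,
          fun hK' => absurd hK' hK⟩
        · rcases (main L j π hj2 hs hL).2.1 hA with h' | h'
          · exact h'
          · exact absurd h' ((main L j π hj2 hs hL).2.2.1 hnB hK)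
        · intro hnc
          exact absurd ((contains_iff hs hj1 hjn').mpr hA) hnc
      · refine ⟨AState.healthy (mval n j π), fun L hL => (main L j π hj2 hs hL).1 hA,
          fun _ => ⟨mval n j π, rfl⟩, ?_, fun hK' => absurd hK' hK⟩
        intro hc _
        exact absurd ((contains_iff hs hj1 hjn').mp hc) hA
  · -- mixed case
    intro hA' hB'
    have hA : Apred j π := by
      obtain ⟨i, h1, h2, h3⟩ := hA'
      rw [hsymm, hsymm] at h3
      exact ⟨i, h1, h2, h3⟩
    refine ⟨mval n j π, fun L hL hnd => ?_⟩
    rcases (main L j π hj2 hs hL).2.1 hA with h | h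
    · exact h
    · exact absurd h hnd
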